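/- Let G be a group that is nilpotent of class at most 3 (i.e. every triple commutator ⁅⁅x,y⁆,z⁆ lies in the center Z(G)). If a, b ∈ G satisfy (a·x)^3 = a^3·x^3 and (b·x)^3 = b^3·x^3 for all x ∈ G, then the element a∘b = b⁻¹ab² also satisfies ((a∘b)·x)^3 = (a∘b)^3·x^3 for all x ∈ G. (That is, the commutant C(°G) is closed under the gyrogroup operation ∘.) -/

import Mathlib

open scoped commutatorElement

theorem commutant_closed_under_gyrOp {G : Type*} [Group G]
    (h3 : ∀ x y z : G, ⁅⁅x, y⁆, z⁆ ∈ Subgroup.center G) (a b : G)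
    (ha : ∀ x : G, (a * x) ^ 3 = a ^ 3 * x ^ 3)
    (hb : ∀ x : G, (b * x) ^ 3 = b ^ 3 * x ^ 3) :
    ∀ x : G, ((b⁻¹ * a * b ^ 2) * x) ^ 3 = (b⁻¹ * a * b ^ 2) ^ 3 * x ^ 3 := by
  intro x
  have cp : ∀ g h : G, (g * h * g⁻¹) ^ 3 = g * h ^ 3 * g⁻¹ := by
    intro g h
    simp only [pow_succ, pow_zero, one_mul]
    group
  have e1 : (b⁻¹ * a * b ^ 2 * x) ^ 3 = b⁻¹ * (a * (b ^ 2 * x * b⁻¹)) ^ 3 * b := by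
    have h : b⁻¹ * a * b ^ 2 * x = b⁻¹ * (a * (b ^ 2 * x * b⁻¹)) * b⁻¹⁻¹ := by group
    rw [h, cp, inv_inv]
  have e2 : (b ^ 2 * x * b⁻¹) ^ 3 = b ^ 2 * (b * (b⁻¹ * x * b)) ^ 3 * (b ^ 2)⁻¹ := by
    have h : b ^ 2 * x * b⁻¹ = b ^ 2 * (b * (b⁻¹ * x * b)) * (b ^ 2)⁻¹ := by group
    rw [h, cp]
  have e3 : (b⁻¹ * x * b) ^ 3 = b⁻¹ * x ^ 3 * b := by
    have h := cp b⁻¹ x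
    rw [inv_inv] at h
    exact h
  have e4 : (b⁻¹ * a * b ^ 2) ^ 3 = b⁻¹ * (a * b) ^ 3 * b := by
    have h : b⁻¹ * a * b ^ 2 = b⁻¹ * (a * b) * b⁻¹⁻¹ := by rw [inv_inv, pow_two, mul_assoc b⁻¹ (a*b) b, mul_assoc, mul_assoc]
    rw [h, cp, inv_inv]
  rw [e1, ha, e2, hb, e3, e4, ha]
  group
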